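/- arXiv:0710.3981 — 2 statements merged into one kernel-verified Lean document; each statement's English description precedes it below -/
import Mathlib

section
/- For every positive integer n and all nonnegative integers a_1, …, a_n, one has (2π)^{-n} ∫_{[0,2π]^n} ∏_{1≤i,j≤n, i≠j} (1 - e^{i(θ_i-θ_j)})^{a_i} dθ_1⋯dθ_n = (a_1+⋯+a_n)! / (a_1!⋯a_n!). -/
open MeasureTheory Complex Finset

noncomputable section

/-- The Dyson integrand. -/
def dysonF (n : ℕ) (a : Fin n → ℕ) (θ : Fin n → ℝ) : ℂ :=
  ∏ i, ∏ j ∈ Finset.univ.erase i,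
    (1 - Complex.exp (Complex.I * (θ i - θ j))) ^ (a i)

/-- The product measure on the torus box. -/
def dysonM (n : ℕ) : Measure (Fin n → ℝ) :=
  Measure.pi fun _ => (volume : Measure ℝ).restrict (Set.Icc 0 (2 * Real.pi))

instance (n : ℕ) : IsFiniteMeasure (dysonM n) := by
  unfold dysonM; infer_instance

lemma dysonM_eq (n : ℕ) :
    dysonM n = (volume : Measure (Fin n → ℝ)).restrict
      (Set.univ.pi fun _ => Set.Icc (0:ℝ) (2 * Real.pi)) := by
  refine (Measure.pi_eq fun s hs => ?_)
  rw [Measure.restrict_apply (MeasurableSet.univ_pi hs)]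
  rw [← Set.pi_inter_distrib]
  rw [volume_pi, Measure.pi_pi]
  simp [Measure.restrict_apply (hs _)]

lemma dysonF_cont (n : ℕ) (a : Fin n → ℕ) : Continuous (dysonF n a) := by
  unfold dysonF
  fun_prop

lemma norm_one_sub_exp_le (x : ℝ) : ‖(1 : ℂ) - Complex.exp (Complex.I * x)‖ ≤ 2 := by
  calc ‖(1 : ℂ) - Complex.exp (Complex.I * x)‖ ≤ ‖(1:ℂ)‖ + ‖Complex.exp (Complex.I * x)‖ :=
        norm_sub_le _ _
  _ ≤ 2 := by
      rw [Complex.norm_exp]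
      simp [Complex.mul_re]
      norm_num

lemma dysonF_bound (n : ℕ) (a : Fin n → ℕ) (θ : Fin n → ℝ) :
    ‖dysonF n a θ‖ ≤ ∏ i, ∏ j ∈ Finset.univ.erase i, (2:ℝ) ^ (a i) := by
  unfold dysonF
  rw [norm_prod]
  refine Finset.prod_le_prod (fun _ _ => norm_nonneg _) fun i _ => ?_
  rw [norm_prod]
  refine Finset.prod_le_prod (fun _ _ => norm_nonneg _) fun j _ => ?_
  rw [norm_pow]
  refine pow_le_pow_left₀ (norm_nonneg _) ?_ _
  have : ((θ i : ℂ) - (θ j : ℂ)) = ((θ i - θ j : ℝ) : ℂ) := by push_cast; ring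
  rw [this]
  exact norm_one_sub_exp_le _

lemma dysonF_integrable (n : ℕ) (a : Fin n → ℕ) : Integrable (dysonF n a) (dysonM n) := by
  refine Integrable.mono' (integrable_const (∏ i, ∏ j ∈ Finset.univ.erase i, (2:ℝ) ^ (a i)))
    (dysonF_cont n a).aestronglyMeasurable ?_
  filter_upwards with θ
  exact dysonF_bound n a θ

section Lagrange

lemma lagrange_sum_inv {m : ℕ} (hm : 0 < m) (z : Fin m → ℂ) (hz : ∀ i, z i ≠ 0)
    (hinj : Function.Injective z) :
    ∑ i, ∏ j ∈ Finset.univ.erase i, (1 - z i / z j)⁻¹ = 1 := by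
  have h := Lagrange.sum_basis (v := z) (s := Finset.univ) hinj.injOn
    (Finset.univ_nonempty_iff.2 (Fin.pos_iff_nonempty.mp hm))
  have h0 := congrArg (Polynomial.eval 0) h
  rw [Polynomial.eval_finset_sum, Polynomial.eval_one] at h0
  calc ∑ i, ∏ j ∈ Finset.univ.erase i, (1 - z i / z j)⁻¹
      = ∑ i, Polynomial.eval 0 (Lagrange.basis Finset.univ z i) := by
        refine Finset.sum_congr rfl fun i _ => ?_
        rw [Lagrange.basis, Polynomial.eval_prod]
        refine Finset.prod_congr rfl fun j hj => ?_
        have hji : j ≠ i := (Finset.mem_erase.mp hj).1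
        have hzz : z j - z i ≠ 0 := sub_ne_zero.mpr (fun h => hji (hinj h))
        rw [Lagrange.basisDivisor]
        simp only [Polynomial.eval_mul, Polynomial.eval_C, Polynomial.eval_sub,
          Polynomial.eval_X]
        have hzj := hz j
        have h1 : (1 - z i / z j) = (z j - z i) / z j := by field_simp
        rw [h1, inv_div]
        rw [div_eq_iff hzz]
        have hzz' : z i - z j ≠ 0 := fun h => hzz (by linear_combination -h)
        field_simp
        ring
    _ = 1 := h0

lemma good_identity {n : ℕ} (hn : 0 < n) (a : Fin n → ℕ) (ha : ∀ i, 0 < a i)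
    (z : Fin n → ℂ) (hz : ∀ i, z i ≠ 0) (hinj : Function.Injective z) :
    ∏ i, ∏ j ∈ Finset.univ.erase i, (1 - z i / z j) ^ (a i)
      = ∑ k, ∏ i, ∏ j ∈ Finset.univ.erase i,
          (1 - z i / z j) ^ (Function.update a k (a k - 1) i) := by
  classical
  set L := ∏ i, ∏ j ∈ Finset.univ.erase i, (1 - z i / z j) ^ (a i) with hL
  have hne : ∀ k j : Fin n, j ≠ k → (1 - z k / z j) ≠ 0 := by
    intro k j hjk h
    have h1 : (1:ℂ) = z k / z j := sub_eq_zero.mp h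
    have : z k = z j := (div_eq_one_iff_eq (hz j)).mp h1.symm
    exact hjk ((hinj this).symm)
  have split : ∀ (e : Fin n → ℕ) (k : Fin n),
      ∏ i, ∏ j ∈ Finset.univ.erase i, (1 - z i / z j) ^ (e i) =
      (∏ j ∈ Finset.univ.erase k, (1 - z k / z j) ^ (e k)) *
        ∏ i ∈ Finset.univ.erase k, ∏ j ∈ Finset.univ.erase i, (1 - z i / z j) ^ (e i) :=
    fun e k => (Finset.mul_prod_erase Finset.univ _ (Finset.mem_univ k)).symm
  have term : ∀ k : Fin n,
      ∏ i, ∏ j ∈ Finset.univ.erase i, (1 - z i / z j) ^ (Function.update a k (a k - 1) i)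
        = L * ∏ j ∈ Finset.univ.erase k, (1 - z k / z j)⁻¹ := by
    intro k
    rw [split _ k, hL, split a k]
    have h1 : ∀ i ∈ Finset.univ.erase k, ∏ j ∈ Finset.univ.erase i,
        (1 - z i / z j) ^ (Function.update a k (a k - 1) i) =
        ∏ j ∈ Finset.univ.erase i, (1 - z i / z j) ^ (a i) := by
      intro i hi
      have : Function.update a k (a k - 1) i = a i :=
        Function.update_of_ne (Finset.mem_erase.mp hi).1 _ _
      rw [this]
    rw [Finset.prod_congr rfl h1, Function.update_self]
    have h2 : ∏ j ∈ Finset.univ.erase k, (1 - z k / z j) ^ (a k)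
        = (∏ j ∈ Finset.univ.erase k, (1 - z k / z j) ^ (a k - 1)) *
          ∏ j ∈ Finset.univ.erase k, (1 - z k / z j) := by
      rw [← Finset.prod_mul_distrib]
      refine Finset.prod_congr rfl fun j hj => ?_
      conv_lhs => rw [← Nat.succ_pred_eq_of_pos (ha k)]
      rw [pow_succ]
      rfl
    rw [h2]
    rw [Finset.prod_inv_distrib]
    have hBne : ∏ j ∈ Finset.univ.erase k, (1 - z k / z j) ≠ 0 :=
      Finset.prod_ne_zero_iff.mpr fun j hj => hne k j (Finset.mem_erase.mp hj).1
    field_simp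
  rw [Finset.sum_congr rfl fun k _ => term k, ← Finset.mul_sum,
    lagrange_sum_inv hn z hz hinj, mul_one]

end Lagrange

section CircleIntegral

lemma integral_circle_pow (k : ℕ) :
    ∫ x in Set.Icc (0:ℝ) (2*Real.pi), Complex.exp (-(Complex.I * x)) ^ k
      = if k = 0 then (2*Real.pi : ℂ) else 0 := by
  have h2 : (0:ℝ) ≤ 2 * Real.pi := by positivity
  rw [integral_Icc_eq_integral_Ioc, ← intervalIntegral.integral_of_le h2]
  rcases eq_or_ne k 0 with rfl | hk
  · simp [intervalIntegral.integral_const, Complex.ofReal_mul]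
  · simp only [if_neg hk]
    have : ∀ x : ℝ, Complex.exp (-(Complex.I * x)) ^ k = Complex.exp ((-(Complex.I * k)) * x) := by
      intro x
      rw [← Complex.exp_nat_mul]
      ring_nf
    simp_rw [this]
    rw [integral_exp_mul_complex (by
      simp [Complex.ext_iff, Nat.cast_eq_zero, hk, Complex.I_ne_zero])]
    have h1 : Complex.exp (-(Complex.I * k) * ((2*Real.pi : ℝ) : ℂ)) = 1 := by
      have := Complex.exp_int_mul_two_pi_mul_I (-(k:ℤ))
      convert this using 2
      push_cast
      ring
    rw [h1]
    simp

lemma integral_poly_const_term {m : ℕ} (c : Fin m → ℝ) (b : Fin m → ℕ) :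
    ∫ x in Set.Icc (0:ℝ) (2*Real.pi),
      (∏ j, (1 - Complex.exp (Complex.I * (c j - x))) ^ (b j)) = (2*Real.pi : ℂ) := by
  set P : Polynomial ℂ := ∏ j, (1 - Polynomial.C (Complex.exp (Complex.I * c j)) *
    Polynomial.X) ^ (b j) with hP
  have hEval : ∀ x : ℝ, (∏ j, (1 - Complex.exp (Complex.I * (c j - x))) ^ (b j)) =
      P.eval (Complex.exp (-(Complex.I * x))) := by
    intro x
    rw [hP, Polynomial.eval_prod]
    refine Finset.prod_congr rfl fun j _ => ?_
    rw [Polynomial.eval_pow]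
    congr 1
    simp only [Polynomial.eval_sub, Polynomial.eval_one, Polynomial.eval_mul,
      Polynomial.eval_C, Polynomial.eval_X]
    congr 1
    rw [← Complex.exp_add]
    congr 1
    ring
  simp_rw [hEval]
  have hES : ∀ w : ℂ, P.eval w = ∑ k ∈ Finset.range (P.natDegree + 1), P.coeff k * w ^ k := by
    intro w; exact P.eval_eq_sum_range w
  simp_rw [hES]
  rw [MeasureTheory.integral_finset_sum]
  · have hzero : ∀ k ∈ Finset.range (P.natDegree + 1), k ≠ 0 →
        ∫ x in Set.Icc (0:ℝ) (2*Real.pi), P.coeff k * Complex.exp (-(Complex.I * x)) ^ k = 0 := by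
      intro k _ hk
      rw [MeasureTheory.integral_const_mul, integral_circle_pow, if_neg hk, mul_zero]
    rw [Finset.sum_eq_single_of_mem 0 (Finset.mem_range.mpr (Nat.succ_pos _)) hzero]
    rw [MeasureTheory.integral_const_mul, integral_circle_pow, if_pos rfl]
    have hc0 : P.coeff 0 = 1 := by
      rw [Polynomial.coeff_zero_eq_eval_zero, hP, Polynomial.eval_prod]
      simp
    rw [hc0, one_mul]
  · intro k _
    apply Continuous.integrableOn_Icc
    fun_prop

end CircleIntegral

section NullSet

lemma dysonM_null {m : ℕ} (i j : Fin (m+1)) (hij : i ≠ j) :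
    dysonM (m+1) {θ | Complex.exp (Complex.I * θ i) = Complex.exp (Complex.I * θ j)} = 0 := by
  obtain ⟨k, hk⟩ := Fin.exists_succAbove_eq (Ne.symm hij)
  set ν := (volume : Measure ℝ).restrict (Set.Icc 0 (2 * Real.pi)) with hν
  have pres := measurePreserving_piFinSuccAbove (fun _ : Fin (m+1) => ν) i
  set e := MeasurableEquiv.piFinSuccAbove (fun _ : Fin (m+1) => ℝ) i with he
  have hB : MeasurableSet {θ : Fin (m+1) → ℝ |
      Complex.exp (Complex.I * θ i) = Complex.exp (Complex.I * θ j)} := by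
    apply measurableSet_eq_fun <;> fun_prop
  have key := (pres.symm e).measure_preimage hB.nullMeasurableSet
  have hpre : (e.symm) ⁻¹' {θ : Fin (m+1) → ℝ |
      Complex.exp (Complex.I * θ i) = Complex.exp (Complex.I * θ j)} =
      {p : ℝ × (Fin m → ℝ) |
        Complex.exp (Complex.I * p.1) = Complex.exp (Complex.I * p.2 k)} := by
    ext p
    have h1 : e.symm p = i.insertNth p.1 p.2 := rfl
    simp only [Set.mem_preimage, Set.mem_setOf_eq, h1]
    rw [Fin.insertNth_apply_same, ← hk, Fin.insertNth_apply_succAbove]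
  rw [hpre] at key
  show (Measure.pi fun _ : Fin (m+1) => ν) _ = 0
  rw [← key]
  have hS : MeasurableSet {p : ℝ × (Fin m → ℝ) |
      Complex.exp (Complex.I * p.1) = Complex.exp (Complex.I * p.2 k)} := by
    apply measurableSet_eq_fun <;> fun_prop
  rw [Measure.prod_apply_symm hS]
  have hslice : ∀ y : Fin m → ℝ, ν ((fun x => (x, y)) ⁻¹' {p : ℝ × (Fin m → ℝ) |
      Complex.exp (Complex.I * p.1) = Complex.exp (Complex.I * p.2 k)}) = 0 := by
    intro y
    have hsub : ((fun x => (x, y)) ⁻¹' {p : ℝ × (Fin m → ℝ) |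
        Complex.exp (Complex.I * p.1) = Complex.exp (Complex.I * p.2 k)}) ⊆
        Set.range (fun t : ℤ => y k + t * (2 * Real.pi)) := by
      intro x hx
      simp only [Set.mem_preimage, Set.mem_setOf_eq] at hx
      rw [Complex.exp_eq_exp_iff_exists_int] at hx
      obtain ⟨t, ht⟩ := hx
      refine ⟨t, ?_⟩
      have := congrArg Complex.im ht
      simp [Complex.mul_im, Complex.mul_re] at this
      show y k + (t:ℝ) * (2*Real.pi) = x
      linarith [this]
    refine le_antisymm ?_ zero_le
    calc ν _ ≤ volume (Set.range (fun t : ℤ => y k + t * (2 * Real.pi))) := by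
          refine le_trans (measure_mono hsub) ?_
          exact Measure.restrict_le_self _
    _ = 0 := (Set.countable_range _).measure_zero _
  simp_rw [hslice]
  simp

lemma dyson_ae_good {m : ℕ} : ∀ᵐ θ ∂ (dysonM (m+1)), ∀ i j : Fin (m+1), i ≠ j →
    Complex.exp (Complex.I * θ i) ≠ Complex.exp (Complex.I * θ j) := by
  rw [ae_all_iff]
  intro i
  rw [ae_all_iff]
  intro j
  by_cases hij : i = j
  · subst hij
    filter_upwards with θ h
    exact absurd rfl h
  · have h0 := dysonM_null i j hij
    have := measure_eq_zero_iff_ae_notMem.mp h0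
    filter_upwards [this] with θ hθ _
    exact hθ

end NullSet

section Boundary

lemma succAbove_image {m : ℕ} (i : Fin (m+1)) (k : Fin m) :
    Finset.image i.succAbove (Finset.univ.erase k)
      = (Finset.univ.erase (i.succAbove k)).erase i := by
  ext j
  simp only [Finset.mem_image, Finset.mem_erase, Finset.mem_univ, and_true]
  constructor
  · rintro ⟨l, hl, rfl⟩
    exact ⟨Fin.succAbove_ne i l, fun h => hl (Fin.succAbove_right_injective h)⟩
  · rintro ⟨hji, hjk⟩
    obtain ⟨l, rfl⟩ := Fin.exists_succAbove_eq hji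
    exact ⟨l, fun h => hjk (by rw [h]), rfl⟩

lemma dysonF_factor {m : ℕ} (a : Fin (m+1) → ℕ) (i : Fin (m+1)) (hai : a i = 0)
    (θ : Fin (m+1) → ℝ) :
    dysonF (m+1) a θ = dysonF m (a ∘ i.succAbove) (θ ∘ i.succAbove) *
      ∏ k : Fin m, (1 - Complex.exp (Complex.I * (θ (i.succAbove k) - θ i)))
        ^ (a (i.succAbove k)) := by
  unfold dysonF
  rw [Fin.prod_univ_succAbove (fun i' => ∏ j ∈ Finset.univ.erase i',
    (1 - Complex.exp (Complex.I * (θ i' - θ j))) ^ (a i')) i]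
  rw [hai]
  simp only [pow_zero, Finset.prod_const_one, one_mul]
  rw [← Finset.prod_mul_distrib]
  refine Finset.prod_congr rfl fun k _ => ?_
  have hmem : i ∈ Finset.univ.erase (i.succAbove k) :=
    Finset.mem_erase.mpr ⟨(Fin.succAbove_ne i k).symm, Finset.mem_univ i⟩
  rw [← Finset.insert_erase hmem, Finset.prod_insert (Finset.notMem_erase _ _)]
  rw [← succAbove_image i k, Finset.prod_image
    (fun x _ y _ h => Fin.succAbove_right_injective h)]
  simp only [Function.comp_apply]
  ring

lemma dyson_boundary {m : ℕ} (a : Fin (m+1) → ℕ) (i : Fin (m+1)) (hai : a i = 0) :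
    ∫ θ, dysonF (m+1) a θ ∂ (dysonM (m+1))
      = (2*Real.pi : ℂ) * ∫ y, dysonF m (a ∘ i.succAbove) y ∂ (dysonM m) := by
  set ν := (volume : Measure ℝ).restrict (Set.Icc 0 (2 * Real.pi)) with hν
  haveI : IsFiniteMeasure ν := by
    constructor
    rw [hν, Measure.restrict_apply_univ]
    exact measure_Icc_lt_top
  set e := MeasurableEquiv.piFinSuccAbove (fun _ : Fin (m+1) => ℝ) i with he
  have pres := measurePreserving_piFinSuccAbove (fun _ : Fin (m+1) => ν) i
  set F : ℝ × (Fin m → ℝ) → ℂ := fun p => dysonF m (a ∘ i.succAbove) p.2 *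
    ∏ k : Fin m, (1 - Complex.exp (Complex.I * (p.2 k - p.1))) ^ (a (i.succAbove k)) with hF
  have hFeq : ∀ p : ℝ × (Fin m → ℝ), dysonF (m+1) a (e.symm p) = F p := by
    intro p
    have h2 : e.symm p = i.insertNth p.1 p.2 := rfl
    rw [h2, dysonF_factor a i hai, hF]
    have hc : (i.insertNth p.1 p.2) ∘ i.succAbove = p.2 := by
      funext k
      simp
    rw [hc]
    congr 1
    refine Finset.prod_congr rfl fun k _ => ?_
    rw [Fin.insertNth_apply_succAbove, Fin.insertNth_apply_same]
  have h1 : ∫ θ, dysonF (m+1) a θ ∂ (dysonM (m+1))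
      = ∫ p, F p ∂ (ν.prod (Measure.pi fun _ : Fin m => ν)) := by
    rw [← pres.integral_comp' (fun p => F p)]
    show ∫ θ, dysonF (m+1) a θ ∂ (Measure.pi fun _ : Fin (m+1) => ν) = _
    refine integral_congr_ae (Filter.Eventually.of_forall fun θ => ?_)
    show dysonF (m + 1) a θ = F (e θ)
    rw [← hFeq (e θ), MeasurableEquiv.symm_apply_apply]
  rw [h1]
  have hFcont : Continuous F := by
    rw [hF]
    apply Continuous.mul
    · exact (dysonF_cont m _).comp continuous_snd
    · fun_prop
  have hFbound : ∀ p : ℝ × (Fin m → ℝ), ‖F p‖ ≤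
      (∏ i', ∏ j ∈ Finset.univ.erase i', (2:ℝ) ^ ((a ∘ i.succAbove) i')) *
        ∏ k : Fin m, (2:ℝ) ^ (a (i.succAbove k)) := by
    intro p
    rw [hF]
    simp only
    rw [norm_mul]
    refine mul_le_mul (dysonF_bound m _ _) ?_ (norm_nonneg _) ?_
    · rw [norm_prod]
      refine Finset.prod_le_prod (fun _ _ => norm_nonneg _) fun k _ => ?_
      rw [norm_pow]
      refine pow_le_pow_left₀ (norm_nonneg _) ?_ _
      have : ((p.2 k : ℂ) - (p.1 : ℂ)) = ((p.2 k - p.1 : ℝ) : ℂ) := by push_cast; ring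
      rw [this]
      exact norm_one_sub_exp_le _
    · exact Finset.prod_nonneg fun _ _ => Finset.prod_nonneg fun _ _ => by positivity
  have hFint : Integrable F (ν.prod (Measure.pi fun _ : Fin m => ν)) := by
    refine Integrable.mono' (integrable_const ((∏ i' : Fin m, ∏ j ∈ Finset.univ.erase i', (2:ℝ) ^ ((a ∘ i.succAbove) i')) * ∏ k : Fin m, (2:ℝ) ^ (a (i.succAbove k)))) hFcont.aestronglyMeasurable ?_
    filter_upwards with p
    exact hFbound p
  rw [MeasureTheory.integral_prod_symm F hFint]
  have hinner : ∀ y : Fin m → ℝ, (∫ x, F (x, y) ∂ν)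
      = dysonF m (a ∘ i.succAbove) y * (2*Real.pi : ℂ) := by
    intro y
    rw [hF]
    simp only
    rw [MeasureTheory.integral_const_mul]
    congr 1
    exact integral_poly_const_term y (fun k => a (i.succAbove k))
  simp_rw [hinner]
  rw [MeasureTheory.integral_mul_const]
  show (∫ y, dysonF m (a ∘ i.succAbove) y ∂ (dysonM m)) * _ = _
  ring


end Boundary

section Recursion

lemma dyson_rec {m : ℕ} (a : Fin (m+1) → ℕ) (ha : ∀ i, 0 < a i) :
    ∫ θ, dysonF (m+1) a θ ∂ (dysonM (m+1))
      = ∑ k, ∫ θ, dysonF (m+1) (Function.update a k (a k - 1)) θ ∂ (dysonM (m+1)) := by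
  rw [← MeasureTheory.integral_finset_sum _ (fun k _ => dysonF_integrable _ _)]
  apply integral_congr_ae
  filter_upwards [dyson_ae_good] with θ hθ
  set z : Fin (m+1) → ℂ := fun i => Complex.exp (Complex.I * θ i) with hzdef
  have hz : ∀ i, z i ≠ 0 := fun i => Complex.exp_ne_zero _
  have hinj : Function.Injective z := by
    intro i j h
    by_contra hne
    exact hθ i j hne h
  have hf : ∀ (b : Fin (m+1) → ℕ), dysonF (m+1) b θ =
      ∏ i, ∏ j ∈ Finset.univ.erase i, (1 - z i / z j) ^ (b i) := by
    intro b
    unfold dysonF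
    refine Finset.prod_congr rfl fun i _ => Finset.prod_congr rfl fun j _ => ?_
    congr 2
    rw [hzdef, ← Complex.exp_sub]
    congr 1
    ring
  rw [hf a, good_identity (Nat.succ_pos m) a ha z hz hinj]
  exact Finset.sum_congr rfl fun k _ => (hf _).symm

end Recursion

section Multinomial

lemma mult_rec {n : ℕ} (hn : 0 < n) (a : Fin n → ℕ) (ha : ∀ i, 0 < a i) :
    (((∑ i, a i).factorial : ℂ) / ∏ i, ((a i).factorial : ℂ))
      = ∑ k, (((∑ i, Function.update a k (a k - 1) i).factorial : ℂ) /
          ∏ i, ((Function.update a k (a k - 1) i).factorial : ℂ)) := by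
  classical
  set S := ∑ i, a i with hS
  have hSpos : 0 < S := Finset.sum_pos (fun i _ => ha i)
    (Finset.univ_nonempty_iff.2 (Fin.pos_iff_nonempty.mp hn))
  have hD : (∏ i, ((a i).factorial : ℂ)) ≠ 0 :=
    Finset.prod_ne_zero_iff.mpr fun i _ => Nat.cast_ne_zero.mpr (Nat.factorial_ne_zero _)
  have hsum : ∀ k : Fin n, ∑ i, Function.update a k (a k - 1) i = S - 1 := by
    intro k
    rw [Finset.sum_update_of_mem (Finset.mem_univ k)]
    have : S = a k + ∑ i ∈ Finset.univ \ {k}, a i := by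
      rw [← Finset.erase_eq]
      exact (Finset.add_sum_erase _ _ (Finset.mem_univ k)).symm
    rw [this]
    have := ha k
    omega
  have hprod : ∀ k : Fin n, (∏ i, ((Function.update a k (a k - 1) i).factorial : ℂ))
      = ((a k - 1).factorial : ℂ) * ∏ i ∈ Finset.univ.erase k, ((a i).factorial : ℂ) := by
    intro k
    rw [← Finset.mul_prod_erase Finset.univ _ (Finset.mem_univ k), Function.update_self]
    congr 1
    refine Finset.prod_congr rfl fun i hi => ?_
    rw [Function.update_of_ne (Finset.mem_erase.mp hi).1]
  have hfact : ∀ k : Fin n, ((a k : ℂ)) * ((a k - 1).factorial : ℂ) = ((a k).factorial : ℂ) := by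
    intro k
    have := Nat.mul_factorial_pred (ha k).ne'
    push_cast [← this]
    ring
  have hterm : ∀ k : Fin n,
      (((∑ i, Function.update a k (a k - 1) i).factorial : ℂ) /
        ∏ i, ((Function.update a k (a k - 1) i).factorial : ℂ))
      = (a k : ℂ) * ((S - 1).factorial : ℂ) / ∏ i, ((a i).factorial : ℂ) := by
    intro k
    rw [hsum k, hprod k]
    rw [← Finset.mul_prod_erase Finset.univ (fun i => ((a i).factorial : ℂ))
      (Finset.mem_univ k)]
    rw [← hfact k]
    have hne1 : ((a k - 1).factorial : ℂ) ≠ 0 := Nat.cast_ne_zero.mpr (Nat.factorial_ne_zero _)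
    have hne2 : (∏ i ∈ Finset.univ.erase k, ((a i).factorial : ℂ)) ≠ 0 :=
      Finset.prod_ne_zero_iff.mpr fun i _ => Nat.cast_ne_zero.mpr (Nat.factorial_ne_zero _)
    have hne3 : (a k : ℂ) ≠ 0 := Nat.cast_ne_zero.mpr (Nat.pos_iff_ne_zero.mp (ha k))
    field_simp
  rw [Finset.sum_congr rfl fun k _ => hterm k]
  rw [← Finset.sum_div, ← Finset.sum_mul]
  have hcast : (∑ k, (a k : ℂ)) = (S : ℂ) := by
    rw [hS]; push_cast; ring
  rw [hcast]
  congr 1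
  have := Nat.mul_factorial_pred hSpos.ne'
  push_cast [← this]
  ring


lemma mult_boundary {m : ℕ} (a : Fin (m+1) → ℕ) (i : Fin (m+1)) (hai : a i = 0) :
    (((∑ j, a j).factorial : ℂ) / ∏ j, ((a j).factorial : ℂ))
      = (((∑ k, a (i.succAbove k)).factorial : ℂ) / ∏ k, ((a (i.succAbove k)).factorial : ℂ)) := by
  rw [Fin.sum_univ_succAbove a i, Fin.prod_univ_succAbove (fun j => ((a j).factorial : ℂ)) i, hai]
  simp

end Multinomial

lemma sum_update_sub {n : ℕ} (a : Fin n → ℕ) (k : Fin n) (hk : 0 < a k) :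
    ∑ i, Function.update a k (a k - 1) i = (∑ i, a i) - 1 := by
  classical
  rw [Finset.sum_update_of_mem (Finset.mem_univ k)]
  have h : ∑ i, a i = a k + ∑ i ∈ Finset.univ \ {k}, a i := by
    rw [← Finset.erase_eq]
    exact (Finset.add_sum_erase _ _ (Finset.mem_univ k)).symm
  rw [h]
  omega

lemma dyson_key : ∀ (N n : ℕ), 0 < n → ∀ a : Fin n → ℕ, n + ∑ i, a i ≤ N →
    ∫ θ, dysonF n a θ ∂ (dysonM n)
      = (2*Real.pi : ℂ)^n * (((∑ i, a i).factorial : ℂ) / ∏ i, ((a i).factorial : ℂ)) := by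
  intro N
  induction N with
  | zero => intro n hn a h; omega
  | succ N ih =>
    intro n hn a hle
    obtain ⟨m, rfl⟩ := Nat.exists_eq_succ_of_ne_zero hn.ne'
    cases m with
    | zero =>
      -- n = 1 : the integrand is constantly 1
      have hone : ∀ θ : Fin 1 → ℝ, dysonF 1 a θ = 1 := by
        intro θ
        unfold dysonF
        refine Finset.prod_eq_one fun i _ => ?_
        have : Finset.univ.erase i = (∅ : Finset (Fin 1)) :=
          Finset.eq_empty_of_forall_notMem fun j hj =>
            (Finset.mem_erase.mp hj).1 (Subsingleton.elim j i)
        rw [this, Finset.prod_empty]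
      simp_rw [hone]
      rw [MeasureTheory.integral_const]
      have hμ : (dysonM 1) Set.univ = ENNReal.ofReal (2*Real.pi) := by
        unfold dysonM
        rw [Measure.pi_univ]
        simp [Real.volume_Icc]
      rw [measureReal_def, hμ]
      have hsum : ∑ i, a i = a 0 := by simp [Fin.sum_univ_one]
      have hprod : ∏ i, ((a i).factorial : ℂ) = ((a 0).factorial : ℂ) := by
        simp [Fin.prod_univ_one]
      rw [hsum, hprod, div_self (Nat.cast_ne_zero.mpr (Nat.factorial_ne_zero _))]
      rw [ENNReal.toReal_ofReal (by positivity)]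
      simp [Complex.ofReal_mul]
    | succ m' =>
      by_cases hall : ∀ i, 0 < a i
      · -- recursion case
        rw [dyson_rec a hall]
        have hS : 0 < ∑ i, a i :=
          Finset.sum_pos (fun i _ => hall i) Finset.univ_nonempty
        have hterm : ∀ k : Fin (m'+1+1),
            ∫ θ, dysonF (m'+1+1) (Function.update a k (a k - 1)) θ ∂ (dysonM (m'+1+1)) =
            (2*Real.pi : ℂ)^(m'+1+1) *
              (((∑ i, Function.update a k (a k - 1) i).factorial : ℂ) /
                ∏ i, ((Function.update a k (a k - 1) i).factorial : ℂ)) := by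
          intro k
          refine ih (m'+1+1) (Nat.succ_pos _) _ ?_
          rw [sum_update_sub a k (hall k)]
          omega
        rw [Finset.sum_congr rfl fun k _ => hterm k, ← Finset.mul_sum,
          ← mult_rec (Nat.succ_pos _) a hall]
      · -- boundary case
        push_neg at hall
        obtain ⟨i, hi⟩ := hall
        have hai : a i = 0 := Nat.le_zero.mp hi
        rw [dyson_boundary a i hai]
        have hsum : ∑ j, a j = ∑ k, a (i.succAbove k) := by
          rw [Fin.sum_univ_succAbove a i, hai, zero_add]
        have hih : ∫ y, dysonF (m'+1) (a ∘ i.succAbove) y ∂ (dysonM (m'+1)) =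
            (2*Real.pi : ℂ)^(m'+1) *
              (((∑ k, a (i.succAbove k)).factorial : ℂ) /
                ∏ k, ((a (i.succAbove k)).factorial : ℂ)) := by
          have := ih (m'+1) (Nat.succ_pos _) (a ∘ i.succAbove) (by
            have : ∑ k, (a ∘ i.succAbove) k = ∑ k, a (i.succAbove k) := rfl
            rw [this, ← hsum]
            omega)
          simpa using this
        rw [hih, mult_boundary a i hai,
          show ((m'+1).succ) = (m'+1)+1 from rfl, pow_succ]
        ring


end

theorem dyson_constant_term (n : ℕ) (hn : 0 < n) (a : Fin n → ℕ) :
    (((2 * Real.pi : ℝ) ^ n : ℝ) : ℂ)⁻¹ *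
      (∫ θ : Fin n → ℝ in Set.univ.pi fun _ => Set.Icc (0:ℝ) (2 * Real.pi),
        ∏ i, ∏ j ∈ Finset.univ.erase i,
          (1 - Complex.exp (Complex.I * (θ i - θ j))) ^ (a i)) =
    ((∑ i, a i).factorial : ℂ) / ∏ i, ((a i).factorial : ℂ) := by
  have key := dyson_key (n + ∑ i, a i) n hn a le_rfl
  rw [← dysonM_eq] at *
  show (((2 * Real.pi : ℝ) ^ n : ℝ) : ℂ)⁻¹ * (∫ θ, dysonF n a θ ∂ (dysonM n)) = _
  rw [key]
  have h2 : ((2*Real.pi : ℂ))^n ≠ 0 := by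
    apply pow_ne_zero
    simp [Complex.ext_iff, Real.pi_ne_zero]
  rw [← mul_assoc]
  rw [show (((2 * Real.pi : ℝ) ^ n : ℝ) : ℂ) = ((2*Real.pi : ℂ))^n by push_cast; ring] at *
  rw [inv_mul_cancel₀ h2, one_mul]
end

section
/- Let n and k be positive integers and let μ be a finite Borel measure on ℝ such that ∫_ℝ |x|^{2k(n-1)} dμ(x) < ∞, and set μ_j := ∫_ℝ x^j dμ(x) for 0 ≤ j ≤ 2k(n-1). Then the hyperdeterminant of the order-2k Hankel tensor built from the moments of μ equals a Selberg-type integral: ∑_{σ_2, …, σ_{2k} ∈ S_n} ε(σ_2)⋯ε(σ_{2k}) ∏_{i=1}^n μ_{(i-1)+(σ_2(i)-1)+⋯+(σ_{2k}(i)-1)} = (1/n!) ∫_{ℝ^n} ∏_{1≤i<j≤n} (x_i-x_j)^{2k} dμ(x_1)⋯dμ(x_n). -/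
open MeasureTheory Finset


private lemma vandermonde_pow_expand {n : ℕ} (N : ℕ) (hN : Even N) (x : Fin n → ℝ) :
    (∏ i, ∏ j ∈ Finset.Ioi i, (x i - x j) ^ N) =
    ∑ τ : Fin N → Equiv.Perm (Fin n),
      (∏ l, ((Equiv.Perm.sign (τ l) : ℤ) : ℝ)) * ∏ i, x i ^ (∑ l, ((τ l) i : ℕ)) := by
  have hdet : (Matrix.vandermonde x).det
      = ∑ σ : Equiv.Perm (Fin n), ((Equiv.Perm.sign σ : ℤ) : ℝ) * ∏ i, x i ^ (σ i : ℕ) := by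
    rw [← Matrix.det_transpose, Matrix.det_apply']
    simp [Matrix.transpose_apply, Matrix.vandermonde]
  have h1 : (∏ i, ∏ j ∈ Finset.Ioi i, (x i - x j) ^ N) = (Matrix.vandermonde x).det ^ N := by
    rw [Matrix.det_vandermonde, ← Finset.prod_pow]
    refine Finset.prod_congr rfl fun i _ => ?_
    rw [← Finset.prod_pow]
    refine Finset.prod_congr rfl fun j _ => ?_
    rw [← neg_sub (x j) (x i), hN.neg_pow]
  have hpow : ∀ c : ℝ, c ^ N = ∏ _l : Fin N, c := fun c => by simp
  rw [h1, hdet, hpow, Finset.prod_univ_sum, Fintype.piFinset_univ]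
  refine Finset.sum_congr rfl fun τ _ => ?_
  rw [Finset.prod_mul_distrib]
  congr 1
  rw [Finset.prod_comm]
  exact Finset.prod_congr rfl fun i _ => (Finset.prod_pow_eq_pow_sum _ _ _)


private lemma sign_pow_even {n : ℕ} (π : Equiv.Perm (Fin n)) {N : ℕ} (hN : Even N) :
    ((Equiv.Perm.sign π : ℤ) : ℝ) ^ N = 1 := by
  obtain ⟨c, hc⟩ := hN
  have h2 : ((Equiv.Perm.sign π : ℤ) : ℝ) ^ 2 = 1 := by
    rcases Int.units_eq_one_or (Equiv.Perm.sign π) with h | h <;> simp [h]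
  rw [hc, ← two_mul, pow_mul, h2, one_pow]

private lemma sum_tuple_perm {n N : ℕ} (hN : Even (N + 1)) (f : ℕ → ℝ) :
    (∑ τ : Fin (N + 1) → Equiv.Perm (Fin n),
        (∏ l, ((Equiv.Perm.sign (τ l) : ℤ) : ℝ)) * ∏ i : Fin n, f (∑ l, ((τ l) i : ℕ)))
    = (n.factorial : ℝ) *
      ∑ σ : Fin N → Equiv.Perm (Fin n),
        (∏ l, ((Equiv.Perm.sign (σ l) : ℤ) : ℝ)) * ∏ i : Fin n, f ((i : ℕ) + ∑ l, ((σ l) i : ℕ)) := by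
  classical
  rw [← Equiv.sum_comp (Fin.consEquiv fun _ : Fin (N + 1) => Equiv.Perm (Fin n)),
    Fintype.sum_prod_type]
  have hinner : ∀ π : Equiv.Perm (Fin n),
      (∑ σ' : Fin N → Equiv.Perm (Fin n),
        (∏ l, ((Equiv.Perm.sign ((Fin.consEquiv fun _ => Equiv.Perm (Fin n)) (π, σ') l) : ℤ) : ℝ)) *
          ∏ i : Fin n, f (∑ l, (((Fin.consEquiv fun _ => Equiv.Perm (Fin n)) (π, σ') l) i : ℕ)))
      = ∑ σ : Fin N → Equiv.Perm (Fin n),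
        (∏ l, ((Equiv.Perm.sign (σ l) : ℤ) : ℝ)) * ∏ i : Fin n, f ((i : ℕ) + ∑ l, ((σ l) i : ℕ)) := by
    intro π
    rw [← Equiv.sum_comp (Equiv.piCongrRight fun _ : Fin N => Equiv.mulRight π)]
    refine Finset.sum_congr rfl fun σ _ => ?_
    have hc0 : ((Fin.consEquiv fun _ => Equiv.Perm (Fin n))
        (π, (Equiv.piCongrRight fun _ : Fin N => Equiv.mulRight π) σ)) =
        Fin.cons π (fun l => σ l * π) := rfl
    rw [hc0]
    have hsign : (∏ l : Fin (N + 1), ((Equiv.Perm.sign ((Fin.cons π (fun l => σ l * π) : Fin (N+1) → Equiv.Perm (Fin n)) l) : ℤ) : ℝ))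
        = ∏ l : Fin N, ((Equiv.Perm.sign (σ l) : ℤ) : ℝ) := by
      rw [Fin.prod_univ_succ]
      simp only [Fin.cons_zero, Fin.cons_succ, map_mul]
      push_cast
      rw [Finset.prod_mul_distrib, Finset.prod_const, Finset.card_univ, Fintype.card_fin]
      have h1 : ((Equiv.Perm.sign π : ℤ) : ℝ) ^ (N + 1) = 1 := sign_pow_even π hN
      rw [pow_succ] at h1
      calc ((Equiv.Perm.sign π : ℤ) : ℝ) *
            ((∏ l : Fin N, ((Equiv.Perm.sign (σ l) : ℤ) : ℝ)) * ((Equiv.Perm.sign π : ℤ) : ℝ) ^ N)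
          = (∏ l : Fin N, ((Equiv.Perm.sign (σ l) : ℤ) : ℝ)) *
            (((Equiv.Perm.sign π : ℤ) : ℝ) ^ N * ((Equiv.Perm.sign π : ℤ) : ℝ)) := by ring
        _ = ∏ l : Fin N, ((Equiv.Perm.sign (σ l) : ℤ) : ℝ) := by rw [h1, mul_one]
    rw [hsign]
    congr 1
    have hsum : ∀ i : Fin n, (∑ l : Fin (N + 1), (((Fin.cons π (fun l => σ l * π) : Fin (N+1) → Equiv.Perm (Fin n)) l) i : ℕ))
        = (π i : ℕ) + ∑ l : Fin N, ((σ l) (π i) : ℕ) := by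
      intro i
      rw [Fin.sum_univ_succ]
      simp [Equiv.Perm.mul_apply]
    simp only [hsum]
    exact Equiv.prod_comp π (fun j => f ((j : ℕ) + ∑ l : Fin N, ((σ l) j : ℕ)))
  simp only [hinner]
  rw [Finset.sum_const, Finset.card_univ, Fintype.card_perm, Fintype.card_fin, nsmul_eq_mul]


private lemma integrable_pow_of_le {μ : Measure ℝ} [IsFiniteMeasure μ] {N e : ℕ}
    (hmom : Integrable (fun x : ℝ => |x| ^ N) μ) (he : e ≤ N) :
    Integrable (fun x : ℝ => x ^ e) μ := by
  have hb : Integrable (fun x : ℝ => 1 + |x| ^ N) μ := (integrable_const 1).add hmom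
  refine hb.mono' ((measurable_id.pow_const e).aestronglyMeasurable) ?_
  filter_upwards with x
  have hx : ‖x ^ e‖ = |x| ^ e := by rw [Real.norm_eq_abs, abs_pow]
  rw [hx]
  rcases le_total (|x|) 1 with h | h
  · have h1 : |x| ^ e ≤ 1 := pow_le_one₀ (abs_nonneg x) h
    nlinarith [pow_nonneg (abs_nonneg x) N]
  · have h1 : |x| ^ e ≤ |x| ^ N := pow_le_pow_right₀ h he
    linarith

private lemma moment_prod (μ : Measure ℝ) [IsFiniteMeasure μ] {n N : ℕ}
    (hmom : Integrable (fun x : ℝ => |x| ^ N) μ) (e : Fin n → ℕ) (he : ∀ i, e i ≤ N) :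
    Integrable (fun x : Fin n → ℝ => ∏ i, (x i) ^ (e i)) (Measure.pi fun _ => μ) ∧
    (∫ x : Fin n → ℝ, ∏ i, (x i) ^ (e i) ∂(Measure.pi fun _ => μ))
      = ∏ i, ∫ x : ℝ, x ^ (e i) ∂μ := by
  have hint : ∀ i, Integrable (fun x : ℝ => x ^ (e i)) μ := fun i =>
    integrable_pow_of_le hmom (he i)
  letI : MeasureSpace ℝ := ⟨μ⟩
  haveI : SigmaFinite (volume : Measure ℝ) := inferInstanceAs (SigmaFinite μ)
  constructor
  · exact Integrable.fintype_prod (f := fun i x => x ^ (e i)) hint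
  · exact integral_fintype_prod_eq_prod (fun i (x : ℝ) => x ^ (e i))


theorem hankel_hyperdeterminant_selberg (n k : ℕ) (hn : 0 < n) (hk : 0 < k)
    (μ : Measure ℝ) [IsFiniteMeasure μ]
    (hmom : Integrable (fun x : ℝ => |x| ^ (2 * k * (n - 1))) μ)
    (m : ℕ → ℝ) (hm : ∀ j ≤ 2 * k * (n - 1), m j = ∫ x : ℝ, x ^ j ∂μ) :
    (∑ σ : Fin (2 * k - 1) → Equiv.Perm (Fin n),
      (∏ l, ((Equiv.Perm.sign (σ l) : ℤ) : ℝ)) *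
        ∏ i : Fin n, m ((i : ℕ) + ∑ l, ((σ l) i : ℕ))) =
    (1 / (n.factorial : ℝ)) *
      ∫ x : Fin n → ℝ,
        (∏ i, ∏ j ∈ Finset.Ioi i, (x i - x j) ^ (2 * k))
        ∂(Measure.pi fun _ => μ) := by
  have h2k : 2 * k = (2 * k - 1) + 1 := by omega
  set N := 2 * k - 1 with hNdef
  have hEven : Even (N + 1) := by rw [← h2k]; exact even_two_mul k
  -- exponent bound
  have hele : ∀ (τ : Fin (N + 1) → Equiv.Perm (Fin n)) (i : Fin n),
      (∑ l, ((τ l) i : ℕ)) ≤ 2 * k * (n - 1) := by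
    intro τ i
    calc (∑ l, ((τ l) i : ℕ)) ≤ ∑ _l : Fin (N + 1), (n - 1) :=
          Finset.sum_le_sum fun l _ => Nat.le_sub_one_of_lt ((τ l) i).isLt
      _ = (N + 1) * (n - 1) := by
          rw [Finset.sum_const, Finset.card_univ, Fintype.card_fin, smul_eq_mul]
      _ = 2 * k * (n - 1) := by rw [← h2k]
  -- integral computation
  have hInt : (∫ x : Fin n → ℝ,
        (∏ i, ∏ j ∈ Finset.Ioi i, (x i - x j) ^ (2 * k)) ∂(Measure.pi fun _ => μ))
      = ∑ τ : Fin (N + 1) → Equiv.Perm (Fin n),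
          (∏ l, ((Equiv.Perm.sign (τ l) : ℤ) : ℝ)) * ∏ i : Fin n, m (∑ l, ((τ l) i : ℕ)) := by
    have hx : ∀ x : Fin n → ℝ,
        (∏ i, ∏ j ∈ Finset.Ioi i, (x i - x j) ^ (2 * k))
        = ∑ τ : Fin (N + 1) → Equiv.Perm (Fin n),
          (∏ l, ((Equiv.Perm.sign (τ l) : ℤ) : ℝ)) * ∏ i, x i ^ (∑ l, ((τ l) i : ℕ)) := by
      intro x
      rw [h2k]
      exact vandermonde_pow_expand (N + 1) hEven x
    simp only [hx]
    rw [integral_finset_sum]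
    · refine Finset.sum_congr rfl fun τ _ => ?_
      rw [integral_const_mul]
      congr 1
      rw [(moment_prod μ hmom (fun i => ∑ l, ((τ l) i : ℕ)) (hele τ)).2]
      exact Finset.prod_congr rfl fun i _ => (hm _ (hele τ i)).symm
    · intro τ _
      exact ((moment_prod μ hmom (fun i => ∑ l, ((τ l) i : ℕ)) (hele τ)).1).const_mul _
  rw [hInt, sum_tuple_perm hEven m]
  rw [← mul_assoc, one_div, inv_mul_cancel₀, one_mul]
  exact_mod_cast (Nat.factorial_pos n).ne'
end
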